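/- For the Fibonacci configurations, the distance between the point nearest the south pole and the point three index steps above it satisfies lim_{N→∞} √(2N+1)·|x_{−N} − x_{−N+3}| = √(16 − √112·cos(6π/φ)). -/

import Mathlib

open MeasureTheory Metric Filter Real Topology

noncomputable section

/-- Euclidean space `ℝ³`. -/
abbrev E3 := EuclideanSpace ℝ (Fin 3)

/-- Constructor for points of `ℝ³` from coordinates. -/
def pt3 (a b c : ℝ) : E3 := (EuclideanSpace.equiv (Fin 3) ℝ).symm ![a, b, c]

/-- The golden ratio `φ = (1 + √5)/2`. -/
def goldenRatio' : ℝ := (1 + Real.sqrt 5) / 2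

/-- Latitude `ψ_i = arcsin(2i/(2N+1))` of the `i`-th Fibonacci point. -/
def fibPsi (N : ℕ) (i : ℤ) : ℝ := Real.arcsin (2 * (i : ℝ) / (2 * (N : ℝ) + 1))

/-- Azimuth `θ_i = 2πi/φ` of the `i`-th Fibonacci point. -/
def fibTheta (i : ℤ) : ℝ := 2 * π * (i : ℝ) / goldenRatio'

/-- The `i`-th Fibonacci point `x_i` on `S²`, for `-N ≤ i ≤ N`. -/
def fibPt (N : ℕ) (i : ℤ) : E3 :=
  pt3 (Real.cos (fibPsi N i) * Real.cos (fibTheta i))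
      (Real.cos (fibPsi N i) * Real.sin (fibTheta i))
      (Real.sin (fibPsi N i))

lemma golden_pos : 0 < goldenRatio' := by
  unfold goldenRatio'
  have := Real.sqrt_nonneg 5
  linarith

lemma pt3_0 (a b c : ℝ) : pt3 a b c 0 = a := rfl
lemma pt3_1 (a b c : ℝ) : pt3 a b c 1 = b := rfl
lemma pt3_2 (a b c : ℝ) : pt3 a b c 2 = c := rfl

lemma aux_key (N : ℕ) (hN : 3 ≤ N) :
    Real.sqrt (2 * (N : ℝ) + 1) * dist (fibPt N (-(N : ℤ))) (fibPt N (-(N : ℤ) + 3))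
      = Real.sqrt (16 - 14 * (1 / (2 * (N : ℝ) + 1))
          - Real.sqrt (4 * (2 - 1 / (2 * (N : ℝ) + 1)) * (14 - 49 * (1 / (2 * (N : ℝ) + 1))))
            * Real.cos (6 * π / goldenRatio')) := by
  have hN' : (3:ℝ) ≤ (N:ℝ) := by exact_mod_cast hN
  set m : ℝ := 2 * (N : ℝ) + 1 with hm
  have hm7 : (7:ℝ) ≤ m := by simp only [hm]; linarith
  have hm0 : (0:ℝ) < m := by linarith
  set c : ℝ := Real.cos (6 * π / goldenRatio') with hc
  set s₁ : ℝ := (1 - m) / m with hs1def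
  set s₂ : ℝ := (7 - m) / m with hs2def
  set θ₁ : ℝ := fibTheta (-(N:ℤ)) with ht1
  set θ₂ : ℝ := fibTheta (-(N:ℤ) + 3) with ht2
  have hsin1 : Real.sin (fibPsi N (-(N:ℤ))) = s₁ := by
    unfold fibPsi
    rw [show 2 * ((-(N:ℤ) : ℤ) : ℝ) / (2 * (N:ℝ) + 1) = s₁ by
      push_cast; rw [hs1def, hm]; field_simp; try ring]
    exact Real.sin_arcsin (by rw [hs1def, le_div_iff₀ hm0]; linarith)
      (by rw [hs1def, div_le_one hm0]; linarith)
  have hsin2 : Real.sin (fibPsi N (-(N:ℤ) + 3)) = s₂ := by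
    unfold fibPsi
    rw [show 2 * ((-(N:ℤ) + 3 : ℤ) : ℝ) / (2 * (N:ℝ) + 1) = s₂ by
      push_cast; rw [hs2def, hm]; field_simp; try ring]
    exact Real.sin_arcsin (by rw [hs2def, le_div_iff₀ hm0]; linarith)
      (by rw [hs2def, div_le_one hm0]; linarith)
  set A : ℝ := 1 - s₁ ^ 2 with hA
  set B : ℝ := 1 - s₂ ^ 2 with hB
  have hA0 : 0 ≤ A := by
    rw [hA, hs1def]; rw [div_pow]; rw [sub_nonneg, div_le_one (by positivity)]
    nlinarith
  have hB0 : 0 ≤ B := by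
    rw [hB, hs2def]; rw [div_pow]; rw [sub_nonneg, div_le_one (by positivity)]
    nlinarith
  have hcos1 : Real.cos (fibPsi N (-(N:ℤ))) = Real.sqrt A := by
    unfold fibPsi
    rw [Real.cos_arcsin]
    congr 1
    rw [hA, hs1def, hm]; push_cast; field_simp; try ring
  have hcos2 : Real.cos (fibPsi N (-(N:ℤ) + 3)) = Real.sqrt B := by
    unfold fibPsi
    rw [Real.cos_arcsin]
    congr 1
    rw [hB, hs2def, hm]; push_cast; field_simp; try ring
  have hθ : Real.cos θ₁ * Real.cos θ₂ + Real.sin θ₁ * Real.sin θ₂ = c := by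
    rw [← Real.cos_sub, hc]
    rw [show θ₁ - θ₂ = -(6 * π / goldenRatio') by
      rw [ht1, ht2]; unfold fibTheta; push_cast
      field_simp
      try ring]
    rw [Real.cos_neg]
  have hd : dist (fibPt N (-(N:ℤ))) (fibPt N (-(N:ℤ) + 3))
      = Real.sqrt ((Real.sqrt A * Real.cos θ₁ - Real.sqrt B * Real.cos θ₂)^2
        + (Real.sqrt A * Real.sin θ₁ - Real.sqrt B * Real.sin θ₂)^2 + (s₁ - s₂)^2) := by
    rw [EuclideanSpace.dist_eq, Fin.sum_univ_three]
    simp only [Real.dist_eq, sq_abs]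
    unfold fibPt
    simp only [pt3_0, pt3_1, pt3_2]
    rw [hsin1, hsin2, hcos1, hcos2, ← ht1, ← ht2]
  rw [hd, ← Real.sqrt_mul hm0.le]
  congr 1
  have hAB : Real.sqrt A * Real.sqrt B = Real.sqrt (A * B) := (Real.sqrt_mul hA0 B).symm
  have hS : (Real.sqrt A * Real.cos θ₁ - Real.sqrt B * Real.cos θ₂)^2
        + (Real.sqrt A * Real.sin θ₁ - Real.sqrt B * Real.sin θ₂)^2 + (s₁ - s₂)^2
      = A + B + (s₁ - s₂)^2 - 2 * Real.sqrt (A * B) * c := by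
    have h1 := Real.sin_sq_add_cos_sq θ₁
    have h2 := Real.sin_sq_add_cos_sq θ₂
    have hA' : Real.sqrt A ^ 2 = A := Real.sq_sqrt hA0
    have hB' : Real.sqrt B ^ 2 = B := Real.sq_sqrt hB0
    rw [← hAB, ← hθ]
    linear_combination (Real.cos θ₁^2 + Real.sin θ₁^2) * hA'
      + (Real.cos θ₂^2 + Real.sin θ₂^2) * hB' + A * h1 + B * h2
  rw [hS]
  have hsqrt : 2 * m * Real.sqrt (A * B)
      = Real.sqrt (4 * (2 - 1 / m) * (14 - 49 * (1 / m))) := by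
    rw [show (4 : ℝ) * (2 - 1 / m) * (14 - 49 * (1 / m)) = (2*m)^2 * (A * B) by
      rw [hA, hB, hs1def, hs2def]; field_simp; ring]
    rw [Real.sqrt_mul (sq_nonneg (2*m)) (A*B), Real.sqrt_sq (by linarith : (0:ℝ) ≤ 2*m), ← hAB]
  rw [← hsqrt]
  have key2 : A + B + (s₁ - s₂)^2 = (16 * m - 14) / m ^ 2 := by
    rw [hA, hB, hs1def, hs2def]; field_simp; ring
  rw [key2]
  generalize Real.sqrt (A * B) = q
  field_simp

/-- For the Fibonacci configurations, the distance between the point nearest the south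
pole and the point three index steps above it satisfies
`lim_{N→∞} √(2N+1)·|x_{-N} − x_{-N+3}| = √(16 − √112·cos(6π/φ))`. -/

theorem fibonacci_polar_distance_limit :
    Tendsto (fun N : ℕ =>
        Real.sqrt (2 * (N : ℝ) + 1) * dist (fibPt N (-(N : ℤ))) (fibPt N (-(N : ℤ) + 3)))
      atTop
      (𝓝 (Real.sqrt (16 - Real.sqrt 112 * Real.cos (6 * π / goldenRatio')))) := by
  set c : ℝ := Real.cos (6 * π / goldenRatio') with hc
  have hG : Continuous (fun x : ℝ =>
      Real.sqrt (16 - 14 * x - Real.sqrt (4 * (2 - x) * (14 - 49 * x)) * c)) := by fun_prop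
  have h0 : Tendsto (fun N : ℕ => 1 / (2 * (N:ℝ) + 1)) atTop (𝓝 0) := by
    simp only [one_div]
    have h1 : Tendsto (fun N : ℕ => 2 * (N:ℝ) + 1) atTop atTop := by
      apply tendsto_atTop_add_const_right
      exact (tendsto_natCast_atTop_atTop (R := ℝ)).const_mul_atTop two_pos
    exact h1.inv_tendsto_atTop
  have hmain : Tendsto (fun N : ℕ =>
      Real.sqrt (16 - 14 * (1 / (2 * (N:ℝ) + 1))
        - Real.sqrt (4 * (2 - 1 / (2 * (N:ℝ) + 1)) * (14 - 49 * (1 / (2 * (N:ℝ) + 1)))) * c))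
      atTop (𝓝 (Real.sqrt (16 - Real.sqrt 112 * c))) := by
    have h2 := (hG.tendsto 0).comp h0
    simp only [Function.comp_def] at h2
    convert h2 using 2
    norm_num
  apply hmain.congr'
  filter_upwards [eventually_ge_atTop 3] with N hN
  exact (aux_key N hN).symm

end
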